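/- Let k be a field, a, b ∈ k, D = ℍ[k,a,b], n ≥ 1, and c : Fin n → k. Define Q : (Fin n → D) → k by Q(x) = Σ_i c_i·( (x_i).re² − a·(x_i).imI² − b·(x_i).imJ² + a·b·(x_i).imK² ). Then: (i) for every x : Fin n → D, Σ_i star(x_i) · (c_i • x_i) = algebraMap k D (Q x), so Q is the trace form of the diagonal Hermitian form ⟨c₁,…,c_n⟩ over D; and (ii) Q is a quadratic form on the 4n-dimensional k-vector space Fin n → D, and it is equivalent (isometric over k) to the diagonal quadratic form on (Fin n × Fin 4) → k given by the weighted sum of squares with weights w(i,0) = c_i, w(i,1) = −a·c_i, w(i,2) = −b·c_i, w(i,3) = a·b·c_i. (That is, q_h ≅ φ_D ⊗ q, where φ_D = ⟨1,−a,−b,ab⟩ is the norm form of D and q = ⟨c₁,…,c_n⟩.) -/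

import Mathlib

open Quaternion Matrix

private theorem stmt9_aux (k : Type*) [Field k] (a b : k) (n : ℕ) (c : Fin n → k)
    (x : Fin n → ℍ[k,a,b]) :
    (QuadraticMap.weightedSumSquares k
        (fun p : Fin n × Fin 4 => ![c p.1, -a * c p.1, -b * c p.1, a * b * c p.1] p.2))
      (((LinearEquiv.piCongrRight fun _ => QuaternionAlgebra.linearEquivTuple a 0 b).trans
        (LinearEquiv.curry k k (Fin n) (Fin 4)).symm) x)
    = ∑ i, c i * ((x i).re ^ 2 - a * (x i).imI ^ 2 - b * (x i).imJ ^ 2 + a * b * (x i).imK ^ 2) := by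
  rw [QuadraticMap.weightedSumSquares_apply, Fintype.sum_prod_type]
  refine Finset.sum_congr rfl fun i _ => ?_
  have h4 : ∀ j : Fin 4,
      ((LinearEquiv.piCongrRight fun _ => QuaternionAlgebra.linearEquivTuple a 0 b).trans
        (LinearEquiv.curry k k (Fin n) (Fin 4)).symm) x (i, j)
        = ![(x i).re, (x i).imI, (x i).imJ, (x i).imK] j := by
    intro j
    simp [LinearEquiv.curry, QuaternionAlgebra.linearEquivTuple, QuaternionAlgebra.equivTuple]
    fin_cases j <;> rfl
  rw [Fin.sum_univ_four, h4 0, h4 1, h4 2, h4 3]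
  simp only [smul_eq_mul]
  norm_num
  simp [Matrix.cons_val]
  ring

/-- The trace form of the diagonal Hermitian form `⟨c₁,…,c_n⟩` over `D = ℍ[k,a,b]`:
`Q(x) = Σ_i c_i (x_i.re² − a x_i.imI² − b x_i.imJ² + a b x_i.imK²)`. It is the
tensor product `φ_D ⊗ q` of the norm form `φ_D = ⟨1,−a,−b,ab⟩` with `q = ⟨c₁,…,c_n⟩`. -/
theorem stmt9 (k : Type*) [Field k] (a b : k) (n : ℕ) (hn : 1 ≤ n) (c : Fin n → k)
    (Q : (Fin n → ℍ[k,a,b]) → k)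
    (hQ : ∀ x, Q x = ∑ i, c i *
      ((x i).re ^ 2 - a * (x i).imI ^ 2 - b * (x i).imJ ^ 2 + a * b * (x i).imK ^ 2)) :
    (∀ x : Fin n → ℍ[k,a,b],
        ∑ i, star (x i) * (c i • x i) = algebraMap k ℍ[k,a,b] (Q x)) ∧
    (∃ Qf : QuadraticForm k (Fin n → ℍ[k,a,b]),
        (∀ x, Qf x = Q x) ∧
        Module.finrank k (Fin n → ℍ[k,a,b]) = 4 * n ∧
        QuadraticMap.Equivalent Qf
          (QuadraticMap.weightedSumSquares k
            (fun p : Fin n × Fin 4 =>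
              ![c p.1, -a * c p.1, -b * c p.1, a * b * c p.1] p.2))) := by
  constructor
  · intro x
    rw [hQ, map_sum]
    refine Finset.sum_congr rfl fun i _ => ?_
    ext <;> simp [QuaternionAlgebra.re_mul, QuaternionAlgebra.imI_mul,
      QuaternionAlgebra.imJ_mul, QuaternionAlgebra.imK_mul, QuaternionAlgebra.algebraMap_eq,
      mul_comm, mul_left_comm] <;> (try ring) <;> tauto
  · refine ⟨(QuadraticMap.weightedSumSquares k
        (fun p : Fin n × Fin 4 => ![c p.1, -a * c p.1, -b * c p.1, a * b * c p.1] p.2)).comp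
        ((LinearEquiv.piCongrRight fun _ => QuaternionAlgebra.linearEquivTuple a 0 b).trans
          (LinearEquiv.curry k k (Fin n) (Fin 4)).symm).toLinearMap,
      fun x => ?_, ?_,
      ⟨(LinearEquiv.piCongrRight fun _ => QuaternionAlgebra.linearEquivTuple a 0 b).trans
          (LinearEquiv.curry k k (Fin n) (Fin 4)).symm, fun x => rfl⟩⟩
    · rw [hQ, QuadraticMap.comp_apply]
      exact stmt9_aux k a b n c x
    · rw [Module.finrank_pi_fintype]
      simp [QuaternionAlgebra.finrank_eq_four, mul_comm]
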